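/- Let t₁, t₂, n₀ ∈ ℝ³ with ‖n₀‖ = 1 and ⟨n₀,t₁⟩ = ⟨n₀,t₂⟩ = 0, P = (t₁|t₂|n₀) invertible, and m₁, m₂, ν₁, ν₂ ∈ ℝ³. Suppose U := (m₁|m₂|n₀)·P⁻¹ is symmetric positive definite. Define II_m♭ = -(m₁|m₂|0)ᵀ·(ν₁|ν₂|0), II_{y₀}♭ = -(t₁|t₂|0)ᵀ·(ν₁|ν₂|0), and Î_m = (m₁|m₂|n₀)ᵀ·(m₁|m₂|n₀). Then the bending tensor R_∞♭ := Pᵀ·[(P⁻ᵀ·Î_m·P⁻¹)^{-1/2}·P⁻ᵀ·II_m♭·P⁻¹ - P⁻ᵀ·II_{y₀}♭·P⁻¹]·P equals the zero matrix. -/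

import Mathlib

open Matrix

/-- The 3×3 matrix with columns `a`, `b`, `c`. -/
def col3 (a b c : Fin 3 → ℝ) : Matrix (Fin 3) (Fin 3) ℝ :=
  Matrix.of fun i j => ![a, b, c] j i

/-- The positive semidefinite square root of a positive semidefinite matrix, as defined in
Mathlib (Dec 2024) under the name `Matrix.PosSemidef.sqrt` (since removed). -/
noncomputable def Matrix.PosSemidef.sqrt {n : Type*} [Fintype n] [DecidableEq n] {𝕜 : Type*}
    [RCLike 𝕜] [PartialOrder 𝕜] {A : Matrix n n 𝕜} (hA : A.PosSemidef) : Matrix n n 𝕜 :=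
  hA.1.eigenvectorUnitary.1 * diagonal ((↑) ∘ Real.sqrt ∘ hA.1.eigenvalues) *
  (star hA.1.eigenvectorUnitary : Matrix n n 𝕜)

open scoped MatrixOrder in
lemma Matrix.PosSemidef.eq_sqrt_of_sq_eq {n : Type*} [Fintype n] [DecidableEq n]
    {A B : Matrix n n ℝ} (hB : B.PosSemidef) (hA : A.PosSemidef) (hsq : B ^ 2 = A) :
    B = hA.sqrt := by
  have h0 : (0 : Matrix n n ℝ) ≤ A := hA.nonneg
  have hc : CFC.sqrt A = B := CFC.sqrt_unique (by rw [← hsq, pow_two]) hB.nonneg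
  rw [← hc, CFC.sqrt_eq_cfc, cfc_nnreal_eq_real _ A, hA.1.cfc_eq]
  simp only [IsHermitian.cfc, Matrix.PosSemidef.sqrt, Unitary.conjStarAlgAut_apply]
  congr 3
  funext i
  simp [Real.coe_sqrt, Real.coe_toNNReal', hA.eigenvalues_nonneg i]

lemma mul_vecMulVec' {n : Type*} [Fintype n] (A : Matrix n n ℝ) (a b : n → ℝ) :
    A * vecMulVec a b = vecMulVec (A *ᵥ a) b := by
  ext i j
  simp [Matrix.mul_apply, vecMulVec_apply, Matrix.mulVec, dotProduct,
    Finset.sum_mul, mul_assoc]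

/-- the constrained Cosserat bending tensor
`R_∞♭ = Pᵀ[(P⁻ᵀ Î_m P⁻¹)^{-1/2} P⁻ᵀ II_m♭ P⁻¹ - P⁻ᵀ II_{y₀}♭ P⁻¹]P`
vanishes for deformations obtained from a pure elastic stretch leaving the
unit normal unaltered. -/
theorem cosserat_bending_vanishes (t₁ t₂ n₀ m₁ m₂ ν₁ ν₂ : Fin 3 → ℝ)
    (P U : Matrix (Fin 3) (Fin 3) ℝ)
    (hn : n₀ ⬝ᵥ n₀ = 1) (h1 : n₀ ⬝ᵥ t₁ = 0) (h2 : n₀ ⬝ᵥ t₂ = 0)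
    (hPdef : P = col3 t₁ t₂ n₀) (hP : IsUnit P.det)
    (hU : U = col3 m₁ m₂ n₀ * P⁻¹) (hUpd : U.PosDef) :
    ∀ h : ((P⁻¹)ᵀ * ((col3 m₁ m₂ n₀)ᵀ * col3 m₁ m₂ n₀) * P⁻¹).PosSemidef,
      Pᵀ * ((h.sqrt)⁻¹ * ((P⁻¹)ᵀ * (-((col3 m₁ m₂ 0)ᵀ * col3 ν₁ ν₂ 0)) * P⁻¹) -
        (P⁻¹)ᵀ * (-((col3 t₁ t₂ 0)ᵀ * col3 ν₁ ν₂ 0)) * P⁻¹) * P = 0 := by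
  intro h
  set M := col3 m₁ m₂ n₀ with hM
  set N := col3 ν₁ ν₂ 0 with hN
  set e₃ : Fin 3 → ℝ := ![0, 0, 1] with he₃
  have hUsymm : Uᵀ = U := by
    have := hUpd.1
    simpa [Matrix.IsHermitian, Matrix.conjTranspose_eq_transpose_of_trivial] using this
  -- h.sqrt = U
  have hsq : U ^ 2 = (P⁻¹)ᵀ * (Mᵀ * M) * P⁻¹ := by
    calc U ^ 2 = Uᵀ * U := by rw [hUsymm, pow_two]
    _ = (P⁻¹)ᵀ * (Mᵀ * M) * P⁻¹ := by
        rw [hU, Matrix.transpose_mul]; simp [Matrix.mul_assoc]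
  have hsqrt : h.sqrt = U := (hUpd.posSemidef.eq_sqrt_of_sq_eq h hsq).symm
  rw [hsqrt]
  -- basic invertibility facts
  have hPP : P⁻¹ * P = 1 := Matrix.nonsing_inv_mul P hP
  have hPP' : P * P⁻¹ = 1 := Matrix.mul_nonsing_inv P hP
  have hUdet : IsUnit U.det := isUnit_iff_ne_zero.mpr hUpd.det_pos.ne'
  have hUU : U⁻¹ * U = 1 := Matrix.nonsing_inv_mul U hUdet
  -- P *ᵥ e₃ = n₀ (third column)
  have hPe : P *ᵥ e₃ = n₀ := by
    ext i
    simp [hPdef, col3, Matrix.mulVec, dotProduct, Fin.sum_univ_three, he₃]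
  have hMe : M *ᵥ e₃ = n₀ := by
    ext i
    simp [hM, col3, Matrix.mulVec, dotProduct, Fin.sum_univ_three, he₃]
  -- (P⁻¹)ᵀ *ᵥ e₃ = n₀, i.e. Pᵀ *ᵥ n₀ = e₃
  have h1' := h1; have h2' := h2; have hn' := hn
  simp only [dotProduct, Fin.sum_univ_three] at h1' h2' hn'
  have hPtn : Pᵀ *ᵥ n₀ = e₃ := by
    ext i
    fin_cases i <;>
      simp [hPdef, col3, Matrix.mulVec, dotProduct, Fin.sum_univ_three, he₃]
    · linear_combination h1'
    · linear_combination h2'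
    · linear_combination hn'
  have hPinvTn : (P⁻¹)ᵀ *ᵥ e₃ = n₀ := by
    rw [← hPtn, Matrix.mulVec_mulVec, Matrix.transpose_nonsing_inv,
      Matrix.nonsing_inv_mul _ (by rwa [Matrix.det_transpose]), Matrix.one_mulVec]
  -- U *ᵥ n₀ = n₀, hence U⁻¹ *ᵥ n₀ = n₀
  have hPin : P⁻¹ *ᵥ n₀ = e₃ := by
    rw [← hPe, Matrix.mulVec_mulVec, hPP, Matrix.one_mulVec]
  have hUn : U *ᵥ n₀ = n₀ := by
    rw [hU, ← Matrix.mulVec_mulVec, hPin, hMe]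
  have hUin : U⁻¹ *ᵥ n₀ = n₀ := by
    conv_lhs => rw [← hUn]
    rw [Matrix.mulVec_mulVec, hUU, Matrix.one_mulVec]
  -- structural decompositions
  have hKt : (col3 m₁ m₂ 0)ᵀ = Mᵀ - vecMulVec e₃ n₀ := by
    ext i j
    rw [Matrix.sub_apply, vecMulVec_apply]
    fin_cases i <;> simp [hM, col3, vecMulVec_apply, he₃, Matrix.transpose_apply]
  have hTt : (col3 t₁ t₂ 0)ᵀ = Pᵀ - vecMulVec e₃ n₀ := by
    ext i j
    rw [Matrix.sub_apply, vecMulVec_apply]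
    fin_cases i <;> simp [hPdef, col3, vecMulVec_apply, he₃, Matrix.transpose_apply]
  -- key identity: U⁻¹ * ((P⁻¹)ᵀ * (col3 m₁ m₂ 0)ᵀ) = (P⁻¹)ᵀ * (col3 t₁ t₂ 0)ᵀ
  have hPM : (P⁻¹)ᵀ * Mᵀ = U := by
    rw [← Matrix.transpose_mul, ← hU, hUsymm]
  have key : U⁻¹ * ((P⁻¹)ᵀ * (col3 m₁ m₂ 0)ᵀ) = (P⁻¹)ᵀ * (col3 t₁ t₂ 0)ᵀ := by
    rw [hKt, hTt, Matrix.mul_sub, Matrix.mul_sub, hPM, mul_vecMulVec', hPinvTn,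
      Matrix.mul_sub, hUU, mul_vecMulVec', hUin, mul_vecMulVec', hPinvTn,
      ← Matrix.transpose_mul, hPP', Matrix.transpose_one]
  have : U⁻¹ * ((P⁻¹)ᵀ * (-((col3 m₁ m₂ 0)ᵀ * N)) * P⁻¹) -
      (P⁻¹)ᵀ * (-((col3 t₁ t₂ 0)ᵀ * N)) * P⁻¹ = 0 := by
    have : U⁻¹ * ((P⁻¹)ᵀ * (col3 m₁ m₂ 0)ᵀ) * (N * P⁻¹) =
        ((P⁻¹)ᵀ * (col3 t₁ t₂ 0)ᵀ) * (N * P⁻¹) := by rw [key]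
    calc U⁻¹ * ((P⁻¹)ᵀ * (-((col3 m₁ m₂ 0)ᵀ * N)) * P⁻¹) -
        (P⁻¹)ᵀ * (-((col3 t₁ t₂ 0)ᵀ * N)) * P⁻¹
        = -(U⁻¹ * ((P⁻¹)ᵀ * (col3 m₁ m₂ 0)ᵀ) * (N * P⁻¹)) +
          ((P⁻¹)ᵀ * (col3 t₁ t₂ 0)ᵀ) * (N * P⁻¹) := by
          simp only [Matrix.mul_neg, Matrix.neg_mul, sub_eq_add_neg, neg_neg,
            Matrix.mul_assoc]
      _ = 0 := by rw [this]; exact neg_add_cancel _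
  rw [this]; simp
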